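/- Let n ≥ 1 be an integer and let λ be a Borel probability measure on ℝ^n with dim_{l^1} λ = s ∈ (0, n). Then for every σ > n − s, the integral ∫_{ℝ^n} |λ̂(ξ)| / (|ξ|^σ + 1) dξ is finite. -/

import Mathlib

open MeasureTheory Metric Set
open scoped ENNReal NNReal

noncomputable section

/-- The Fourier transform of a measure on `ℝⁿ`. -/
def mFT {n : ℕ} (μ : Measure (EuclideanSpace ℝ (Fin n))) (ξ : EuclideanSpace ℝ (Fin n)) : ℂ :=
  ∫ x, Complex.exp (((-2 * Real.pi * (inner ℝ x ξ : ℝ) : ℝ) : ℂ) * Complex.I) ∂μ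

/-- An integer lattice point of `ℤⁿ`, regarded as a point of `ℝⁿ`. -/
def lat {n : ℕ} (k : Fin n → ℤ) : EuclideanSpace ℝ (Fin n) := WithLp.toLp 2 (fun i => (k i : ℝ))

/-- The Fourier `l^p` dimension of a measure on `ℝⁿ`. -/
def dimlp {n : ℕ} (p : ℝ) (μ : Measure (EuclideanSpace ℝ (Fin n))) : ℝ :=
  sSup {s : ℝ | 0 < s ∧ ∃ C : ℝ, 0 < C ∧ ∀ R : ℝ, 1 ≤ R →
    ∀ θ : EuclideanSpace ℝ (Fin n), (∀ i, θ i ∈ Set.Icc (0 : ℝ) 1) →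
      (∑' k : Fin n → ℤ, if ‖lat k‖ ≤ R then ‖mFT μ (lat k + θ)‖ ^ p else 0)
        ≤ C * R ^ ((n : ℝ) - s)}

/-- The (topological) support of a measure. -/
def msupp {X : Type*} [TopologicalSpace X] [MeasurableSpace X] (μ : Measure X) : Set X :=
  {x | ∀ U : Set X, IsOpen U → x ∈ U → 0 < μ U}

/-- The lower Hausdorff dimension of a measure. -/
def muDimH {X : Type*} [EMetricSpace X] [MeasurableSpace X] (μ : Measure X) : ℝ≥0∞ :=
  ⨅ (A : Set X) (_ : MeasurableSet A) (_ : 0 < μ A), dimH A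

/-- The surface measure on the unit sphere `S^{n-1}`, as the `(n-1)`-dimensional
Hausdorff measure restricted to the sphere. -/
def sphMeasure (n : ℕ) : Measure (EuclideanSpace ℝ (Fin n)) :=
  (μH[((n : ℝ) - 1)]).restrict (sphere (0 : EuclideanSpace ℝ (Fin n)) 1)

/-- The radial projection centred at `x`. -/
def radProj {n : ℕ} (x y : EuclideanSpace ℝ (Fin n)) : EuclideanSpace ℝ (Fin n) :=
  ‖y - x‖⁻¹ • (y - x)

/-- Identify `ℝ × ℝ` with the Euclidean plane. -/
def toE2 (q : ℝ × ℝ) : EuclideanSpace ℝ (Fin 2) := !₂[q.1, q.2]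

/-! ### Auxiliary lemmas -/

lemma mFT_sm {n : ℕ} (μ : Measure (EuclideanSpace ℝ (Fin n))) [SFinite μ] :
    StronglyMeasurable (mFT μ) := by
  have hc : Continuous (fun p : EuclideanSpace ℝ (Fin n) × EuclideanSpace ℝ (Fin n) =>
      Complex.exp (((-2 * Real.pi * (inner ℝ p.2 p.1 : ℝ) : ℝ) : ℂ) * Complex.I)) := by
    refine Complex.continuous_exp.comp ?_
    refine Continuous.mul ?_ continuous_const
    exact Complex.continuous_ofReal.comp <| (continuous_const.mul
      (continuous_inner.comp (continuous_snd.prodMk continuous_fst)))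
  exact hc.stronglyMeasurable.integral_prod_right'

lemma abs_coord_le {n : ℕ} (x : EuclideanSpace ℝ (Fin n)) (i : Fin n) : |x i| ≤ ‖x‖ := by
  rw [EuclideanSpace.norm_eq, ← Real.sqrt_sq_eq_abs]
  apply Real.sqrt_le_sqrt
  have := Finset.single_le_sum (f := fun j => ‖x j‖ ^ 2) (fun j _ => sq_nonneg _)
    (Finset.mem_univ i)
  simpa [Real.norm_eq_abs, sq_abs] using this

lemma norm_le_sqrt {n : ℕ} (θ : EuclideanSpace ℝ (Fin n)) (hθ : ∀ i, θ i ∈ Set.Icc (0:ℝ) 1) :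
    ‖θ‖ ≤ Real.sqrt n := by
  rw [EuclideanSpace.norm_eq]
  apply Real.sqrt_le_sqrt
  calc ∑ i, ‖θ i‖ ^ 2 ≤ ∑ _i : Fin n, (1:ℝ) := by
        refine Finset.sum_le_sum fun i _ => ?_
        have h := hθ i
        rw [Real.norm_eq_abs, sq_abs]
        nlinarith [h.1, h.2]
    _ = n := by simp

lemma lat_finite {n : ℕ} (R : ℝ) : {k : Fin n → ℤ | ‖lat k‖ ≤ R}.Finite := by
  apply Set.Finite.subset (Set.finite_Icc (fun _ : Fin n => -⌈R⌉) (fun _ => ⌈R⌉))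
  intro k hk
  simp only [Set.mem_setOf_eq] at hk
  have key : ∀ i, |k i| ≤ ⌈R⌉ := by
    intro i
    have h1 : |(k i : ℝ)| ≤ R := le_trans (by simpa [lat] using abs_coord_le (lat k) i) hk
    have h2 : ((|k i| : ℤ) : ℝ) ≤ (⌈R⌉ : ℝ) := by
      push_cast; exact le_trans h1 (Int.le_ceil R)
    exact_mod_cast h2
  exact ⟨fun i => (abs_le.mp (key i)).1, fun i => (abs_le.mp (key i)).2⟩

lemma F12 {n : ℕ} (k : Fin n → ℤ) :
    (2:ℝ) ^ ((⌊Real.logb 2 (‖lat k‖ + 1)⌋₊ : ℝ)) ≤ ‖lat k‖ + 1 ∧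
      ‖lat k‖ + 1 < (2:ℝ) ^ ((⌊Real.logb 2 (‖lat k‖ + 1)⌋₊ : ℝ) + 1) := by
  set x := ‖lat k (n := n)‖ + 1 with hx
  have hx1 : (1:ℝ) ≤ x := by have := norm_nonneg (lat k (n := n)); linarith
  have hx0 : (0:ℝ) < x := by linarith
  have hlog : 0 ≤ Real.logb 2 x := Real.logb_nonneg one_lt_two hx1
  have hfl : ((⌊Real.logb 2 x⌋₊ : ℝ)) ≤ Real.logb 2 x := Nat.floor_le hlog
  have hfl2 : Real.logb 2 x < (⌊Real.logb 2 x⌋₊ : ℝ) + 1 := Nat.lt_floor_add_one _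
  have hrl : (2:ℝ) ^ Real.logb 2 x = x := Real.rpow_logb two_pos (by norm_num) hx0
  constructor
  · calc (2:ℝ) ^ ((⌊Real.logb 2 x⌋₊ : ℝ)) ≤ (2:ℝ) ^ Real.logb 2 x :=
        Real.rpow_le_rpow_of_exponent_le one_le_two hfl
      _ = x := hrl
  · calc x = (2:ℝ) ^ Real.logb 2 x := hrl.symm
      _ < (2:ℝ) ^ ((⌊Real.logb 2 x⌋₊ : ℝ) + 1) :=
        Real.rpow_lt_rpow_of_exponent_lt one_lt_two hfl2

def box (n : ℕ) : Set (EuclideanSpace ℝ (Fin n)) := {θ | ∀ i, θ i ∈ Set.Ico (0:ℝ) 1}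

def cube {n : ℕ} (k : Fin n → ℤ) : Set (EuclideanSpace ℝ (Fin n)) :=
  {ξ | ∀ i, ξ i ∈ Set.Ico ((k i : ℝ)) ((k i : ℝ) + 1)}

lemma meas_eval {n : ℕ} (i : Fin n) :
    Measurable (fun ξ : EuclideanSpace ℝ (Fin n) => ξ i) :=
  (EuclideanSpace.proj (𝕜 := ℝ) i).continuous.measurable

lemma cube_measurable {n : ℕ} (k : Fin n → ℤ) : MeasurableSet (cube k) := by
  have : cube k = ⋂ i, (fun ξ : EuclideanSpace ℝ (Fin n) => ξ i) ⁻¹'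
      (Set.Ico ((k i : ℝ)) ((k i : ℝ) + 1)) := by
    ext ξ; simp [cube, Set.mem_iInter]
  rw [this]
  exact MeasurableSet.iInter fun i => (meas_eval i) measurableSet_Ico

lemma box_measurable {n : ℕ} : MeasurableSet (box n) := by
  have : box n = ⋂ i, (fun ξ : EuclideanSpace ℝ (Fin n) => ξ i) ⁻¹' (Set.Ico (0:ℝ) 1) := by
    ext ξ; simp [box, Set.mem_iInter]
  rw [this]
  exact MeasurableSet.iInter fun i => (meas_eval i) measurableSet_Ico

lemma cube_disj {n : ℕ} : Pairwise (Function.onFun Disjoint (cube (n := n))) := by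
  intro k k' hkk'
  rw [Function.onFun, Set.disjoint_left]
  intro ξ h1 h2
  apply hkk'
  funext i
  have a1 := h1 i; have a2 := h2 i
  have e1 : ⌊ξ i⌋ = k i := Int.floor_eq_iff.mpr ⟨a1.1, a1.2⟩
  have e2 : ⌊ξ i⌋ = k' i := Int.floor_eq_iff.mpr ⟨a2.1, a2.2⟩
  omega

lemma cube_union {n : ℕ} : (⋃ k, cube (n := n) k) = Set.univ := by
  ext ξ
  simp only [Set.mem_iUnion, Set.mem_univ, iff_true]
  exact ⟨fun i => ⌊ξ i⌋, fun i => ⟨Int.floor_le _, Int.lt_floor_add_one _⟩⟩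

lemma cube_preimage {n : ℕ} (k : Fin n → ℤ) :
    (fun θ => lat k + θ) ⁻¹' cube k = box n := by
  ext θ
  simp only [Set.mem_preimage, cube, box, Set.mem_setOf_eq]
  constructor
  · intro h i
    have := h i
    have e : (lat k + θ) i = (k i : ℝ) + θ i := by simp [lat]
    rw [e] at this
    exact ⟨by linarith [this.1], by linarith [this.2]⟩
  · intro h i
    have e : (lat k + θ) i = (k i : ℝ) + θ i := by simp [lat]
    rw [Set.mem_Ico, e]
    exact ⟨by linarith [(h i).1], by linarith [(h i).2]⟩

lemma decomp {n : ℕ} (f : EuclideanSpace ℝ (Fin n) → ℝ≥0∞) (hf : Measurable f) :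
    (∫⁻ ξ, f ξ) = ∑' k : Fin n → ℤ, ∫⁻ θ in box n, f (lat k + θ) := by
  have h1 : (∫⁻ ξ, f ξ) = ∫⁻ ξ in ⋃ k, cube (n := n) k, f ξ := by
    rw [cube_union, Measure.restrict_univ]
  rw [h1, lintegral_iUnion cube_measurable cube_disj]
  congr 1
  funext k
  have hmp := measurePreserving_add_left (volume : Measure (EuclideanSpace ℝ (Fin n))) (lat k)
  rw [← hmp.map_eq, setLIntegral_map (cube_measurable k) hf hmp.measurable, cube_preimage,
    hmp.map_eq]

lemma core {n : ℕ} (a : (Fin n → ℤ) → ℝ) (ha : ∀ k, 0 ≤ a k)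
    (θ : EuclideanSpace ℝ (Fin n)) (hθ : ∀ i, θ i ∈ Set.Icc (0:ℝ) 1)
    (σ s' C : ℝ) (hσ0 : 0 < σ) (hC : 0 < C) (hexp : (n:ℝ) - s' - σ < 0)
    (hyp : ∀ R : ℝ, 1 ≤ R → (∑' k : Fin n → ℤ, if ‖lat k‖ ≤ R then a k else 0)
      ≤ C * R ^ ((n:ℝ) - s')) :
    ∑' k : Fin n → ℤ, ENNReal.ofReal (a k / (‖lat k + θ‖ ^ σ + 1))
      ≤ ENNReal.ofReal ((2 + 2*Real.sqrt n)^σ * C * (2:ℝ)^((n:ℝ)-s')) *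
        (1 - ENNReal.ofReal ((2:ℝ)^((n:ℝ)-s'-σ)))⁻¹ := by
  classical
  set A : ℝ := (2 + 2*Real.sqrt n)^σ with hAdef
  set r : ℝ := (2:ℝ)^((n:ℝ)-s'-σ) with hrdef
  set K : ℝ := A * C * (2:ℝ)^((n:ℝ)-s') with hKdef
  have hsq : (0:ℝ) ≤ Real.sqrt n := Real.sqrt_nonneg n
  have hA0 : 0 < A := Real.rpow_pos_of_pos (by linarith) σ
  have hr0 : 0 < r := Real.rpow_pos_of_pos two_pos _
  have hK0 : 0 < K := by positivity
  set J : (Fin n → ℤ) → ℕ := fun k => ⌊Real.logb 2 (‖lat k‖ + 1)⌋₊ with hJdef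
  -- per-j bound
  have perj : ∀ j : ℕ,
      (∑' k : Fin n → ℤ, if J k = j then ENNReal.ofReal (a k / (‖lat k + θ‖ ^ σ + 1)) else 0)
        ≤ ENNReal.ofReal (K * r ^ j) := by
    intro j
    set W : ℝ := A * ((2:ℝ)^(σ*(j:ℝ)))⁻¹ with hWdef
    set R : ℝ := (2:ℝ)^((j:ℝ)+1) with hRdef
    have h2j : (0:ℝ) < (2:ℝ)^(σ*(j:ℝ)) := Real.rpow_pos_of_pos two_pos _
    have hW0 : 0 ≤ W := by positivity
    have hR1 : (1:ℝ) ≤ R := by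
      rw [hRdef, show (1:ℝ) = (2:ℝ)^(0:ℝ) by simp]
      exact Real.rpow_le_rpow_of_exponent_le one_le_two (by positivity)
    -- termwise weight bound
    have hw : ∀ k : Fin n → ℤ, J k = j →
        a k / (‖lat k + θ‖ ^ σ + 1) ≤ W * a k := by
      intro k hk
      set ξ : EuclideanSpace ℝ (Fin n) := lat k + θ with hξdef
      have hd0 : (0:ℝ) < ‖ξ‖ ^ σ + 1 := by positivity
      have hF1 := (F12 k).1
      rw [show ⌊Real.logb 2 (‖lat k‖ + 1)⌋₊ = j from hk] at hF1
      have hlatk : ‖lat k (n:=n)‖ ≤ ‖ξ‖ + Real.sqrt n := by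
        have h1 : lat k (n:=n) = ξ - θ := by rw [hξdef]; abel
        calc ‖lat k (n:=n)‖ = ‖ξ - θ‖ := by rw [h1]
          _ ≤ ‖ξ‖ + ‖θ‖ := norm_sub_le _ _
          _ ≤ ‖ξ‖ + Real.sqrt n := by linarith [norm_le_sqrt θ hθ]
      have hξch : (2:ℝ)^((j:ℝ)) ≤ (1 + Real.sqrt n) * (‖ξ‖ + 1) := by
        nlinarith [norm_nonneg ξ]
      have hpow : (2:ℝ)^(σ*(j:ℝ)) ≤ (1 + Real.sqrt n)^σ * (‖ξ‖ + 1)^σ := by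
        calc (2:ℝ)^(σ*(j:ℝ)) = ((2:ℝ)^((j:ℝ)))^σ := by
              rw [← Real.rpow_mul (by norm_num : (0:ℝ) ≤ 2), mul_comm]
          _ ≤ ((1 + Real.sqrt n) * (‖ξ‖ + 1))^σ :=
              Real.rpow_le_rpow (by positivity) hξch hσ0.le
          _ = (1 + Real.sqrt n)^σ * (‖ξ‖ + 1)^σ :=
              Real.mul_rpow (by positivity) (by positivity)
      have hmax : (‖ξ‖ + 1)^σ ≤ (2:ℝ)^σ * (‖ξ‖^σ + 1) := by
        have h2σ : (0:ℝ) < (2:ℝ)^σ := Real.rpow_pos_of_pos two_pos σ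
        have hξσ : (0:ℝ) ≤ ‖ξ‖^σ := Real.rpow_nonneg (norm_nonneg ξ) σ
        rcases le_total ‖ξ‖ 1 with h|h
        · have h2 : (‖ξ‖ + 1)^σ ≤ (2:ℝ)^σ :=
            Real.rpow_le_rpow (by positivity) (by linarith) hσ0.le
          nlinarith
        · have h2 : (‖ξ‖ + 1)^σ ≤ (2*‖ξ‖)^σ :=
            Real.rpow_le_rpow (by positivity) (by linarith) hσ0.le
          rw [Real.mul_rpow (by norm_num) (norm_nonneg ξ)] at h2
          nlinarith
      have hAeq : A = (1 + Real.sqrt n)^σ * (2:ℝ)^σ := by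
        rw [hAdef, show (2 + 2*Real.sqrt n) = (1 + Real.sqrt n) * 2 by ring,
          Real.mul_rpow (by positivity) (by norm_num)]
      have hch : (2:ℝ)^(σ*(j:ℝ)) ≤ A * (‖ξ‖ ^ σ + 1) := by
        have hns : (0:ℝ) ≤ (1 + Real.sqrt n)^σ := by positivity
        calc (2:ℝ)^(σ*(j:ℝ)) ≤ (1 + Real.sqrt n)^σ * (‖ξ‖ + 1)^σ := hpow
          _ ≤ (1 + Real.sqrt n)^σ * ((2:ℝ)^σ * (‖ξ‖^σ + 1)) :=
              mul_le_mul_of_nonneg_left hmax hns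
          _ = A * (‖ξ‖ ^ σ + 1) := by rw [hAeq]; ring
      have hinv : (‖ξ‖ ^ σ + 1)⁻¹ ≤ W := by
        rw [hWdef, ← div_eq_mul_inv, le_div_iff₀ h2j, inv_mul_eq_div, div_le_iff₀ hd0]
        linarith [hch]
      calc a k / (‖ξ‖ ^ σ + 1) = a k * (‖ξ‖ ^ σ + 1)⁻¹ := div_eq_mul_inv _ _
        _ ≤ a k * W := mul_le_mul_of_nonneg_left hinv (ha k)
        _ = W * a k := mul_comm _ _
    -- summability of truncated sum
    have hsummable : Summable (fun k : Fin n → ℤ => if ‖lat k‖ ≤ R then a k else 0) := by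
      apply summable_of_finite_support
      apply Set.Finite.subset (lat_finite (n := n) R)
      intro k hk
      simp only [Function.mem_support, ne_eq] at hk
      by_contra h
      exact hk (if_neg h)
    have hnonneg : ∀ k : Fin n → ℤ, 0 ≤ if ‖lat k‖ ≤ R then a k else 0 := by
      intro k; split_ifs; exacts [ha k, le_refl 0]
    calc (∑' k : Fin n → ℤ, if J k = j then ENNReal.ofReal (a k / (‖lat k + θ‖ ^ σ + 1)) else 0)
        ≤ ∑' k : Fin n → ℤ, if J k = j then ENNReal.ofReal W * ENNReal.ofReal (a k) else 0 := by
          apply ENNReal.tsum_le_tsum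
          intro k
          by_cases h : J k = j
          · rw [if_pos h, if_pos h, ← ENNReal.ofReal_mul hW0]
            exact ENNReal.ofReal_le_ofReal (hw k h)
          · rw [if_neg h, if_neg h]
      _ = ENNReal.ofReal W * ∑' k : Fin n → ℤ, (if J k = j then ENNReal.ofReal (a k) else 0) := by
          rw [← ENNReal.tsum_mul_left]
          exact tsum_congr fun k => by rw [mul_ite, mul_zero]
      _ ≤ ENNReal.ofReal W * ∑' k : Fin n → ℤ,
            (if ‖lat k‖ ≤ R then ENNReal.ofReal (a k) else 0) := by
          apply mul_le_mul_right
          apply ENNReal.tsum_le_tsum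
          intro k
          by_cases h : J k = j
          · have hF2 := (F12 k).2
            rw [show ⌊Real.logb 2 (‖lat k‖ + 1)⌋₊ = j from h] at hF2
            rw [if_pos h, if_pos (show ‖lat k (n:=n)‖ ≤ R by rw [hRdef]; linarith)]
          · rw [if_neg h]; exact zero_le
      _ = ENNReal.ofReal W *
            ENNReal.ofReal (∑' k : Fin n → ℤ, if ‖lat k‖ ≤ R then a k else 0) := by
          rw [ENNReal.ofReal_tsum_of_nonneg hnonneg hsummable]
          exact congrArg _ (tsum_congr fun k => by split_ifs <;> simp)
      _ ≤ ENNReal.ofReal W * ENNReal.ofReal (C * R ^ ((n:ℝ) - s')) :=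
          mul_le_mul_right (ENNReal.ofReal_le_ofReal (hyp R hR1)) _
      _ = ENNReal.ofReal (W * (C * R ^ ((n:ℝ) - s'))) := (ENNReal.ofReal_mul hW0).symm
      _ = ENNReal.ofReal (K * r ^ j) := by
          congr 1
          have e4 : (2:ℝ)^(-(σ*(j:ℝ))) * (2:ℝ)^(((j:ℝ)+1)*((n:ℝ)-s'))
              = (2:ℝ)^((n:ℝ)-s') * (2:ℝ)^((((n:ℝ)-s'-σ))*(j:ℝ)) := by
            rw [← Real.rpow_add two_pos, ← Real.rpow_add two_pos]
            congr 1; ring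
          rw [hWdef, hRdef, hKdef, hrdef,
            show ((2:ℝ)^(σ*(j:ℝ)))⁻¹ = (2:ℝ)^(-(σ*(j:ℝ))) from (Real.rpow_neg (by norm_num) _).symm,
            ← Real.rpow_natCast ((2:ℝ)^((n:ℝ)-s'-σ)) j, ← Real.rpow_mul (by norm_num : (0:ℝ) ≤ 2),
            ← Real.rpow_mul (by norm_num : (0:ℝ) ≤ 2)]
          linear_combination (A * C) * e4
  -- assemble
  calc ∑' k : Fin n → ℤ, ENNReal.ofReal (a k / (‖lat k + θ‖ ^ σ + 1))
      = ∑' k : Fin n → ℤ, ∑' j : ℕ,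
          (if J k = j then ENNReal.ofReal (a k / (‖lat k + θ‖ ^ σ + 1)) else 0) := by
        refine tsum_congr fun k => ?_
        rw [tsum_eq_single (J k) (fun b hb => if_neg (fun h => hb h.symm))]
        · rw [if_pos rfl]
    _ = ∑' j : ℕ, ∑' k : Fin n → ℤ,
          (if J k = j then ENNReal.ofReal (a k / (‖lat k + θ‖ ^ σ + 1)) else 0) :=
        ENNReal.tsum_comm
    _ ≤ ∑' j : ℕ, ENNReal.ofReal (K * r ^ j) := ENNReal.tsum_le_tsum perj
    _ = ENNReal.ofReal K * ∑' j : ℕ, (ENNReal.ofReal r) ^ j := by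
        rw [← ENNReal.tsum_mul_left]
        refine tsum_congr fun j => ?_
        rw [ENNReal.ofReal_mul hK0.le, ENNReal.ofReal_pow hr0.le]
    _ = ENNReal.ofReal K * (1 - ENNReal.ofReal r)⁻¹ := by rw [ENNReal.tsum_geometric]

/-- If `λ` is a Borel probability measure on `ℝⁿ` with `dim_{l¹} λ = s ∈ (0, n)`,
then for every `σ > n - s`, `∫_{ℝⁿ} |λ̂(ξ)| / (|ξ|^σ + 1) dξ < ∞`. -/
theorem stmt6 {n : ℕ} (hn : 1 ≤ n) (μ : Measure (EuclideanSpace ℝ (Fin n)))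
    [IsProbabilityMeasure μ] (s : ℝ) (hs : 0 < s) (hsn : s < n)
    (hdim : dimlp 1 μ = s) (σ : ℝ) (hσ : (n : ℝ) - s < σ) :
    (∫⁻ ξ, ENNReal.ofReal (‖mFT μ ξ‖ / (‖ξ‖ ^ σ + 1))) < ⊤ := by
  classical
  have hσ0 : 0 < σ := by
    have : (0:ℝ) < (n:ℝ) - s := by linarith
    linarith
  -- extract a good exponent s' from the supremum
  set S : Set ℝ := {t : ℝ | 0 < t ∧ ∃ C : ℝ, 0 < C ∧ ∀ R : ℝ, 1 ≤ R →
    ∀ θ : EuclideanSpace ℝ (Fin n), (∀ i, θ i ∈ Set.Icc (0 : ℝ) 1) →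
      (∑' k : Fin n → ℤ, if ‖lat k‖ ≤ R then ‖mFT μ (lat k + θ)‖ ^ (1:ℝ) else 0)
        ≤ C * R ^ ((n : ℝ) - t)} with hSdef
  have hSup : sSup S = s := hdim
  have hne : S.Nonempty := by
    by_contra h
    rw [Set.not_nonempty_iff_eq_empty] at h
    rw [h, Real.sSup_empty] at hSup
    linarith
  have hbdd : BddAbove S := by
    by_contra h
    rw [Real.sSup_of_not_bddAbove h] at hSup
    linarith
  obtain ⟨s', hs'S, hs'⟩ := exists_lt_of_lt_csSup hne
    (show (n:ℝ) - σ < sSup S by rw [hSup]; linarith)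
  obtain ⟨hs'0, C, hC, hbound⟩ := hs'S
  have hexp : (n:ℝ) - s' - σ < 0 := by linarith
  -- the uniform bound
  set B : ℝ≥0∞ := ENNReal.ofReal ((2 + 2*Real.sqrt n)^σ * C * (2:ℝ)^((n:ℝ)-s')) *
    (1 - ENNReal.ofReal ((2:ℝ)^((n:ℝ)-s'-σ)))⁻¹ with hBdef
  have hBlt : B < ⊤ := by
    have hr1 : (2:ℝ)^((n:ℝ)-s'-σ) < 1 := Real.rpow_lt_one_of_one_lt_of_neg one_lt_two hexp
    have h1 : ENNReal.ofReal ((2:ℝ)^((n:ℝ)-s'-σ)) < 1 := ENNReal.ofReal_lt_one.mpr hr1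
    have h2 : (0:ℝ≥0∞) < 1 - ENNReal.ofReal ((2:ℝ)^((n:ℝ)-s'-σ)) := tsub_pos_of_lt h1
    exact ENNReal.mul_lt_top ENNReal.ofReal_lt_top (ENNReal.inv_lt_top.mpr h2)
  -- measurability
  set f : EuclideanSpace ℝ (Fin n) → ℝ≥0∞ :=
    fun ξ => ENNReal.ofReal (‖mFT μ ξ‖ / (‖ξ‖ ^ σ + 1)) with hfdef
  have hf : Measurable f := by
    apply ENNReal.measurable_ofReal.comp
    exact (mFT_sm μ).measurable.norm.div
      ((continuous_norm.rpow_const (fun x => Or.inr hσ0.le)).add continuous_const).measurable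
  -- pointwise bound on the box
  have hcore : ∀ θ ∈ box n, (∑' k : Fin n → ℤ, f (lat k + θ)) ≤ B := by
    intro θ hθ
    have hθ' : ∀ i, θ i ∈ Set.Icc (0:ℝ) 1 := fun i => ⟨(hθ i).1, le_of_lt (hθ i).2⟩
    refine core (fun k => ‖mFT μ (lat k + θ)‖) (fun k => norm_nonneg _) θ hθ' σ s' C hσ0 hC
      hexp ?_
    intro R hR
    have := hbound R hR θ hθ'
    simpa [Real.rpow_one] using this
  calc (∫⁻ ξ, f ξ) = ∑' k : Fin n → ℤ, ∫⁻ θ in box n, f (lat k + θ) := decomp f hf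
    _ = ∫⁻ θ in box n, ∑' k : Fin n → ℤ, f (lat k + θ) := by
        exact (lintegral_tsum (f := fun (k : Fin n → ℤ) (θ : EuclideanSpace ℝ (Fin n)) =>
          f (lat k + θ)) (fun k => (hf.comp (measurable_const_add (lat k))).aemeasurable)).symm
    _ ≤ ∫⁻ _θ in box n, B := setLIntegral_mono' box_measurable hcore
    _ = B * volume (box n) := setLIntegral_const _ _
    _ < ⊤ := by
        refine ENNReal.mul_lt_top hBlt ?_
        have hsub : box n ⊆ closedBall (0 : EuclideanSpace ℝ (Fin n)) (Real.sqrt n) := by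
          intro θ hθ
          have hθ' : ∀ i, θ i ∈ Set.Icc (0:ℝ) 1 := fun i => ⟨(hθ i).1, le_of_lt (hθ i).2⟩
          simpa [mem_closedBall, dist_eq_norm] using norm_le_sqrt θ hθ'
        exact lt_of_le_of_lt (measure_mono hsub) (measure_closedBall_lt_top)
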